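/- arXiv:2603.26808 — 2 statements merged into one kernel-verified Lean document; each statement's English description precedes it below -/
import Mathlib

section
/- Let ψ : ℂ → ℂ be entire with finite Segal–Bargmann norm. Then for every natural number n, the inner product of the monomial z^n against ψ extracts the n-th Taylor coefficient at the origin: (1/π)∫_ℂ conj(z)^n ψ(z) e^{-|z|²} dA(z) = (d/dz)^n ψ evaluated at 0 (the n-th iterated derivative of ψ at 0), which equals n! times the n-th Taylor coefficient of ψ. -/
open MeasureTheory Real
open Set

lemma SB.summable_norm_taylor (ψ : ℂ → ℂ) (hψ : Differentiable ℂ ψ) {t : ℝ} (ht : 0 ≤ t) :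
    Summable (fun k : ℕ => ‖(k.factorial : ℂ)⁻¹ * iteratedDeriv k ψ 0‖ * t ^ k) := by
  have h := (Complex.hasSum_taylorSeries_of_entire hψ 0 (2 * t + 1)).summable
  have h2 := (h.tendsto_atTop_zero.norm)
  have hb : BddAbove (Set.range fun k : ℕ =>
      ‖(k.factorial : ℂ)⁻¹ • ((2 * t + 1 : ℂ) - 0) ^ k • iteratedDeriv k ψ 0‖) := by
    simpa using h2.bddAbove_range
  obtain ⟨C, hC⟩ := hb
  have hnorm : ∀ k : ℕ, ‖(k.factorial : ℂ)⁻¹ • ((2 * t + 1 : ℂ) - 0) ^ k • iteratedDeriv k ψ 0‖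
      = ‖(k.factorial : ℂ)⁻¹ * iteratedDeriv k ψ 0‖ * (2 * t + 1) ^ k := by
    intro k
    have h1 : ((2 * t + 1 : ℂ)) = ((2 * t + 1 : ℝ) : ℂ) := by push_cast; ring
    rw [sub_zero, smul_eq_mul, smul_eq_mul, norm_mul, norm_mul, norm_mul, norm_pow, h1,
      Complex.norm_real, Real.norm_eq_abs, abs_of_nonneg (by linarith)]
    ring
  have hCb : ∀ k : ℕ, ‖(k.factorial : ℂ)⁻¹ * iteratedDeriv k ψ 0‖ * (2 * t + 1) ^ k ≤ C := by
    intro k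
    rw [← hnorm]
    exact hC (Set.mem_range_self k)
  refine Summable.of_nonneg_of_le (fun k => by positivity) (fun k => ?_)
    ((summable_geometric_two).mul_left C)
  have ht2 : t ≤ (2 * t + 1) * (1 / 2) := by linarith
  calc ‖(k.factorial : ℂ)⁻¹ * iteratedDeriv k ψ 0‖ * t ^ k
      ≤ ‖(k.factorial : ℂ)⁻¹ * iteratedDeriv k ψ 0‖ * ((2 * t + 1) * (1 / 2)) ^ k := by
        gcongr
    _ = ‖(k.factorial : ℂ)⁻¹ * iteratedDeriv k ψ 0‖ * (2 * t + 1) ^ k * (1 / 2) ^ k := by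
        rw [mul_pow]; ring
    _ ≤ C * (1 / 2) ^ k := by
        have := hCb k
        have h0 : (0:ℝ) ≤ (1 / 2 : ℝ) ^ k := by positivity
        nlinarith [hCb k]

lemma SB.gauss_integrable : Integrable (fun z : ℂ => Real.exp (-(1 / 2) * ‖z‖ ^ 2)) := by
  have h := GaussianFourier.integrable_cexp_neg_mul_sq_norm_add (V := ℂ)
    (b := (1 / 2 : ℂ)) (by norm_num) 0 0
  refine h.norm.congr ?_
  filter_upwards with z
  rw [Complex.norm_exp]
  congr 1
  simp [Complex.add_re, Complex.mul_re]
  rw [← Complex.ofReal_pow, Complex.ofReal_re]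

lemma SB.moment_integrable (m : ℕ) :
    Integrable (fun z : ℂ => ‖z‖ ^ m * Real.exp (-‖z‖ ^ 2)) := by
  refine ((SB.gauss_integrable.const_mul ((m.factorial : ℝ) * Real.exp (1 / 2))).mono'
    ?_ ?_)
  · exact (((continuous_norm.pow m).mul
      ((continuous_norm.pow 2).neg.rexp)).aestronglyMeasurable)
  · filter_upwards with z
    have h0 : (0:ℝ) ≤ ‖z‖ := norm_nonneg z
    have h1 : ‖z‖ ^ m ≤ m.factorial * Real.exp ‖z‖ := by
      have := Real.sum_le_exp_of_nonneg h0 (m + 1)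
      have h2 : ‖z‖ ^ m / m.factorial ≤ Real.exp ‖z‖ := by
        refine le_trans ?_ this
        refine Finset.single_le_sum (f := fun i => ‖z‖ ^ i / i.factorial)
          (fun i _ => by positivity) (Finset.self_mem_range_succ m)
      rw [div_le_iff₀ (by positivity)] at h2
      linarith [h2]
    have h3 : Real.exp ‖z‖ ≤ Real.exp (1 / 2 + ‖z‖ ^ 2 / 2) := by
      apply Real.exp_le_exp.mpr
      nlinarith [sq_nonneg (‖z‖ - 1)]
    rw [Real.norm_eq_abs, abs_of_nonneg (by positivity)]
    calc ‖z‖ ^ m * Real.exp (-‖z‖ ^ 2)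
        ≤ (m.factorial * Real.exp (1 / 2 + ‖z‖ ^ 2 / 2)) * Real.exp (-‖z‖ ^ 2) := by
          gcongr
          exact h1.trans (by gcongr)
      _ = m.factorial * Real.exp (1 / 2) * Real.exp (-(1 / 2) * ‖z‖ ^ 2) := by
          rw [mul_assoc, ← Real.exp_add, mul_assoc, ← Real.exp_add]
          congr 2
          ring

lemma SB.main_integrable (ψ : ℂ → ℂ) (hψ : Differentiable ℂ ψ)
    (hint : Integrable (fun z : ℂ => ‖ψ z‖ ^ 2 * Real.exp (-(‖z‖) ^ 2))) (n : ℕ) :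
    Integrable (fun z : ℂ =>
      (starRingEnd ℂ z) ^ n * ψ z * (Real.exp (-(‖z‖) ^ 2) : ℂ)) := by
  have hg : Integrable (fun z : ℂ =>
      (1 / 2 : ℝ) * (‖z‖ ^ (2 * n) * Real.exp (-‖z‖ ^ 2)) +
      (1 / 2 : ℝ) * (‖ψ z‖ ^ 2 * Real.exp (-(‖z‖) ^ 2))) :=
    ((SB.moment_integrable (2 * n)).const_mul _).add (hint.const_mul _)
  refine hg.mono' ?_ ?_
  · refine Continuous.aestronglyMeasurable ?_
    refine ((Complex.continuous_conj.pow n).mul hψ.continuous).mul ?_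
    exact Complex.continuous_ofReal.comp ((continuous_norm.pow 2).neg.rexp)
  · filter_upwards with z
    have habs : ‖z‖ = ‖z‖ := rfl
    rw [norm_mul, norm_mul, norm_pow]
    have h1 : ‖(starRingEnd ℂ) z‖ = ‖z‖ := by simp
    have h2 : ‖(Real.exp (-(‖z‖) ^ 2) : ℂ)‖ = Real.exp (-‖z‖ ^ 2) := by
      rw [Complex.norm_real, Real.norm_eq_abs, abs_of_pos (Real.exp_pos _), habs]
    rw [h1, h2, habs]
    have key : ‖z‖ ^ n * ‖ψ z‖ ≤ (1 / 2) * ‖z‖ ^ (2 * n) + (1 / 2) * ‖ψ z‖ ^ 2 := by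
      have h2n : ‖z‖ ^ (2 * n) = (‖z‖ ^ n) ^ 2 := by
        rw [← pow_mul]; ring_nf
      nlinarith [sq_nonneg (‖z‖ ^ n - ‖ψ z‖)]
    have hexp : (0:ℝ) < Real.exp (-‖z‖ ^ 2) := Real.exp_pos _
    calc ‖z‖ ^ n * ‖ψ z‖ * Real.exp (-‖z‖ ^ 2)
        ≤ ((1 / 2) * ‖z‖ ^ (2 * n) + (1 / 2) * ‖ψ z‖ ^ 2) * Real.exp (-‖z‖ ^ 2) := by
          gcongr
      _ = (1 / 2 : ℝ) * (‖z‖ ^ (2 * n) * Real.exp (-‖z‖ ^ 2)) +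
          (1 / 2 : ℝ) * (‖ψ z‖ ^ 2 * Real.exp (-‖z‖ ^ 2)) := by ring

lemma SB.integrableOn_polar_real {E : Type*} [NormedAddCommGroup E] [NormedSpace ℝ E]
    (g : ℝ × ℝ → E) (hg : Integrable g) :
    IntegrableOn (fun p : ℝ × ℝ => p.1 • g (polarCoord.symm p)) polarCoord.target := by
  set B : ℝ × ℝ → ℝ × ℝ →L[ℝ] ℝ × ℝ := fun p =>
    LinearMap.toContinuousLinearMap (Matrix.toLin (Module.Basis.finTwoProd ℝ) (Module.Basis.finTwoProd ℝ)
      !![Real.cos p.2, -p.1 * Real.sin p.2; Real.sin p.2, p.1 * Real.cos p.2])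
  have A : ∀ p ∈ polarCoord.target, HasFDerivWithinAt polarCoord.symm (B p) polarCoord.target p :=
    fun p _ => (hasFDerivAt_polarCoord_symm p).hasFDerivWithinAt
  have B_det : ∀ p, (B p).det = p.1 := by
    intro p
    conv_rhs => rw [← one_mul p.1, ← cos_sq_add_sin_sq p.2]
    simp only [B, neg_mul, LinearMap.det_toContinuousLinearMap, LinearMap.det_toLin,
      Matrix.det_fin_two_of, sub_neg_eq_add]
    ring
  have hinj : Set.InjOn polarCoord.symm polarCoord.target := by
    have := polarCoord.symm.injOn
    rwa [OpenPartialHomeomorph.symm_source] at this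
  have h := (integrableOn_image_iff_integrableOn_abs_det_fderiv_smul volume
    polarCoord.open_target.measurableSet A hinj g).mp (hg.integrableOn)
  refine h.congr_fun ?_ polarCoord.open_target.measurableSet
  intro p hp
  dsimp only
  rw [B_det, abs_of_pos hp.1]

lemma SB.integrableOn_polar_complex {E : Type*} [NormedAddCommGroup E] [NormedSpace ℝ E]
    (f : ℂ → E) (hf : Integrable f) :
    IntegrableOn (fun p : ℝ × ℝ => p.1 • f (Complex.polarCoord.symm p)) polarCoord.target := by
  have hg : Integrable (f ∘ Complex.measurableEquivRealProd.symm) :=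
    (Complex.volume_preserving_equiv_real_prod.symm).integrable_comp hf.aestronglyMeasurable |>.mpr hf
  have h := SB.integrableOn_polar_real _ hg
  refine h.congr_fun (fun p hp => ?_) polarCoord.open_target.measurableSet
  simp only [Function.comp_apply]
  congr 1

lemma SB.inner_integral (ψ : ℂ → ℂ) (hψ : Differentiable ℂ ψ) (n : ℕ) {r : ℝ} (hr : 0 ≤ r) :
    ∫ θ in Ioo (-π) π,
      ((starRingEnd ℂ) (Complex.polarCoord.symm (r, θ))) ^ n * ψ (Complex.polarCoord.symm (r, θ))
    = 2 * π * (r : ℂ) ^ (2 * n) * ((n.factorial : ℂ)⁻¹ * iteratedDeriv n ψ 0) := by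
  set a : ℕ → ℂ := fun k => (k.factorial : ℂ)⁻¹ * iteratedDeriv k ψ 0 with ha
  set G : ℕ → ℝ → ℂ := fun k θ =>
    (a k * (r : ℂ) ^ (n + k)) * Complex.exp ((((k : ℂ) - n) * Complex.I) * (θ : ℂ)) with hG
  have hP : ∀ θ : ℝ, (Complex.polarCoord.symm (r, θ) : ℂ)
      = (r : ℂ) * Complex.exp ((θ : ℂ) * Complex.I) := by
    intro θ
    rw [Complex.polarCoord_symm_apply, Complex.exp_mul_I]
    simp [Complex.ofReal_cos, Complex.ofReal_sin]
  have hconj : ∀ θ : ℝ, (starRingEnd ℂ) (Complex.polarCoord.symm (r, θ))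
      = (r : ℂ) * Complex.exp (-((θ : ℂ) * Complex.I)) := by
    intro θ
    rw [hP, map_mul, ← Complex.exp_conj]
    simp [Complex.conj_ofReal]
  have hsum : ∀ θ : ℝ,
      ((starRingEnd ℂ) (Complex.polarCoord.symm (r, θ))) ^ n * ψ (Complex.polarCoord.symm (r, θ))
      = ∑' k, G k θ := by
    intro θ
    have h0 := Complex.taylorSeries_eq_of_entire' 0 (Complex.polarCoord.symm (r, θ)) hψ
    rw [← h0, ← tsum_mul_left]
    apply tsum_congr
    intro k
    have he : Complex.exp (-((θ:ℂ) * Complex.I)) ^ n * Complex.exp ((θ:ℂ) * Complex.I) ^ k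
        = Complex.exp ((((k : ℂ) - n) * Complex.I) * (θ : ℂ)) := by
      rw [← Complex.exp_nat_mul, ← Complex.exp_nat_mul, ← Complex.exp_add]
      congr 1
      ring
    rw [hconj, hP, sub_zero, hG]
    dsimp only
    rw [← he, ha, mul_pow, mul_pow, pow_add]
    ring
  have hnormG : ∀ (k : ℕ) (θ : ℝ), ‖G k θ‖ = ‖a k‖ * r ^ (n + k) := by
    intro k θ
    rw [hG]
    simp only [norm_mul, norm_pow, Complex.norm_exp,
      Complex.norm_real, Real.norm_eq_abs, abs_of_nonneg hr]
    have hre : ((((k : ℂ) - n) * Complex.I) * (θ : ℂ)).re = 0 := by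
      simp [Complex.mul_re, Complex.mul_im]
    rw [hre, Real.exp_zero, mul_one]
  have hsummable : Summable (fun k => ‖a k‖ * r ^ (n + k) * (2 * π)) := by
    have h1 := SB.summable_norm_taylor ψ hψ hr
    have h2 := (h1.mul_right (r ^ n * (2 * π)))
    refine h2.congr (fun k => ?_)
    rw [pow_add]
    ring
  have hfin : (∑' k, ∫⁻ θ in Ioo (-π) π, ‖G k θ‖₊ ∂volume) ≠ ⊤ := by
    have hle : ∀ k : ℕ, (∫⁻ θ in Ioo (-π) π, ‖G k θ‖₊ ∂volume)
        ≤ ENNReal.ofReal (‖a k‖ * r ^ (n + k) * (2 * π)) := by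
      intro k
      have : (∫⁻ θ in Ioo (-π) π, ‖G k θ‖₊ ∂volume)
          = ∫⁻ θ in Ioo (-π) π, ENNReal.ofReal (‖a k‖ * r ^ (n + k)) ∂volume := by
        apply lintegral_congr
        intro θ
        rw [show (‖G k θ‖₊ : ENNReal) = ENNReal.ofReal ‖G k θ‖ from (ofReal_norm _).symm, hnormG]
      rw [this, setLIntegral_const, Real.volume_Ioo, ← ENNReal.ofReal_mul (by positivity)]
      apply ENNReal.ofReal_le_ofReal
      have hπ := Real.pi_pos
      nlinarith [norm_nonneg (a k), pow_nonneg hr (n + k)]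
    refine ne_top_of_le_ne_top ?_ (ENNReal.tsum_le_tsum hle)
    rw [← ENNReal.ofReal_tsum_of_nonneg (fun k => by positivity) hsummable]
    exact ENNReal.ofReal_ne_top
  have hmeas : ∀ k : ℕ, AEStronglyMeasurable (G k) (volume.restrict (Ioo (-π) π)) := by
    intro k
    refine Continuous.aestronglyMeasurable ?_
    exact continuous_const.mul (Complex.continuous_exp.comp
      (continuous_const.mul Complex.continuous_ofReal))
  rw [setIntegral_congr_fun measurableSet_Ioo (fun θ _ => hsum θ),
    integral_tsum hmeas hfin]
  have hzero : ∀ k : ℕ, k ≠ n → ∫ θ in Ioo (-π) π, G k θ = 0 := by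
    intro k hk
    have hc : ((k : ℂ) - n) * Complex.I ≠ 0 := by
      refine mul_ne_zero (sub_ne_zero.mpr ?_) Complex.I_ne_zero
      exact_mod_cast hk
    have hπ := Real.pi_pos
    rw [hG]
    simp only
    rw [MeasureTheory.integral_const_mul, ← integral_Ioc_eq_integral_Ioo,
      ← intervalIntegral.integral_of_le (by linarith), integral_exp_mul_complex hc]
    have hx : Complex.exp ((((k:ℂ) - n) * Complex.I) * (π:ℂ))
        = Complex.exp ((((k:ℂ) - n) * Complex.I) * ((-π : ℝ):ℂ)) := by
      apply Complex.exp_eq_exp_iff_exists_int.mpr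
      exact ⟨(k : ℤ) - n, by push_cast; ring⟩
    rw [hx, sub_self, zero_div, mul_zero]
  rw [tsum_eq_single n hzero]
  rw [hG]
  simp only [sub_self, zero_mul, Complex.exp_zero, mul_one]
  rw [setIntegral_const, Real.volume_real_Ioo_of_le (by linarith [Real.pi_pos]),
    Complex.real_smul]
  push_cast
  rw [← two_mul]
  ring

lemma SB.radial (n : ℕ) :
    ∫ r in Ioi (0:ℝ), r ^ (2 * n + 1) * Real.exp (-r ^ 2) = n.factorial / 2 := by
  have h := integral_rpow_mul_exp_neg_rpow (p := 2) (q := (2 * n + 1 : ℝ)) two_pos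
    (by have := n.cast_nonneg (α := ℝ); linarith)
  rw [show ((2 * (n:ℝ) + 1) + 1) / 2 = (n : ℝ) + 1 by ring, Real.Gamma_nat_eq_factorial] at h
  rw [show ((n.factorial : ℝ) / 2) = 1 / 2 * n.factorial by ring, ← h]
  refine setIntegral_congr_fun measurableSet_Ioi (fun x hx => ?_)
  have hx0 : (0:ℝ) ≤ x := le_of_lt hx
  rw [show (2 * (n:ℝ) + 1) = ((2 * n + 1 : ℕ) : ℝ) by push_cast; ring,
    Real.rpow_natCast, show (2:ℝ) = ((2:ℕ):ℝ) by norm_num, Real.rpow_natCast]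


/-- If `ψ : ℂ → ℂ` is entire with finite Segal–Bargmann norm, then for every
natural number `n`, pairing the monomial `z^n` against `ψ` extracts the `n`-th Taylor
coefficient at the origin:
`(1/π) ∫_ℂ conj(z)^n ψ(z) e^{-|z|²} dA(z) = (iteratedDeriv n ψ) 0`,
which equals `n!` times the `n`-th Taylor coefficient `a_n = (iteratedDeriv n ψ 0)/n!`. -/
theorem segal_bargmann_taylor_coefficient (ψ : ℂ → ℂ)
    (hψ : Differentiable ℂ ψ)
    (hint : Integrable (fun z : ℂ => ‖ψ z‖ ^ 2 * Real.exp (-(‖z‖) ^ 2))) :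
    ∀ n : ℕ,
      ((1 / (π : ℂ)) * ∫ z : ℂ,
          (starRingEnd ℂ z) ^ n * ψ z * (Real.exp (-(‖z‖) ^ 2) : ℂ)) =
        iteratedDeriv n ψ 0 ∧
      iteratedDeriv n ψ 0 =
        (n.factorial : ℂ) * (iteratedDeriv n ψ 0 / (n.factorial : ℂ)) := by
  intro n
  have hfac : (n.factorial : ℂ) ≠ 0 := Nat.cast_ne_zero.mpr n.factorial_ne_zero
  refine ⟨?_, by field_simp⟩
  set f : ℂ → ℂ :=
    fun z => (starRingEnd ℂ z) ^ n * ψ z * (Real.exp (-(‖z‖) ^ 2) : ℂ) with hf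
  have hfi := SB.main_integrable ψ hψ hint n
  have hOn := SB.integrableOn_polar_complex f hfi
  have key : ∫ z : ℂ, f z
      = (2 * π * ((n.factorial : ℂ)⁻¹ * iteratedDeriv n ψ 0)) * ((n.factorial / 2 : ℝ) : ℂ) := by
    rw [← Complex.integral_comp_polarCoord_symm f]
    rw [Measure.volume_eq_prod] at hOn ⊢
    rw [polarCoord_target] at hOn ⊢
    rw [setIntegral_prod _ hOn]
    have hinner : ∀ r ∈ Ioi (0:ℝ),
        (∫ θ in Ioo (-π) π, (r, θ).1 • f (Complex.polarCoord.symm (r, θ)))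
        = (2 * π * ((n.factorial : ℂ)⁻¹ * iteratedDeriv n ψ 0))
            * ((r ^ (2 * n + 1) * Real.exp (-r ^ 2) : ℝ) : ℂ) := by
      intro r hr
      have hr0 : 0 < r := hr
      have h1 : ∀ θ : ℝ, (r, θ).1 • f (Complex.polarCoord.symm (r, θ))
          = ((r : ℂ) * (Real.exp (-r ^ 2) : ℂ))
            * (((starRingEnd ℂ) (Complex.polarCoord.symm (r, θ))) ^ n
              * ψ (Complex.polarCoord.symm (r, θ))) := by
        intro θ
        have habs : ‖(Complex.polarCoord.symm (r, θ))‖ = r := by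
          rw [Complex.norm_polarCoord_symm]
          exact abs_of_pos hr0
        rw [hf]
        dsimp only
        rw [habs, Complex.real_smul]
        ring
      rw [MeasureTheory.integral_congr_ae (ae_of_all _ (fun θ => h1 θ)),
        MeasureTheory.integral_const_mul, SB.inner_integral ψ hψ n hr0.le]
      push_cast
      ring
    have h2 : (∫ a in Ioi (0:ℝ), ((a ^ (2 * n + 1) * Real.exp (-a ^ 2) : ℝ) : ℂ))
        = (((∫ a in Ioi (0:ℝ), a ^ (2 * n + 1) * Real.exp (-a ^ 2)) : ℝ) : ℂ) :=
      integral_ofReal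
    rw [setIntegral_congr_fun measurableSet_Ioi hinner, MeasureTheory.integral_const_mul,
      h2, SB.radial n]
  rw [show (∫ z : ℂ, (starRingEnd ℂ z) ^ n * ψ z * (Real.exp (-(‖z‖) ^ 2) : ℂ))
    = ∫ z : ℂ, f z from rfl, key]
  have hπ : (π : ℂ) ≠ 0 := Complex.ofReal_ne_zero.mpr Real.pi_ne_zero
  push_cast
  field_simp
end

section
/- Fix α ∈ ℂ and natural numbers m, n. Then ∫_ℂ conj(z)^m · z^n · e^{α z} · e^{-|z|²} dA(z) equals π · m! · α^{m-n}/(m-n)! when m ≥ n, and equals 0 when m < n. Consequently, the matrix elements of the Toeplitz operator whose symbol is the coherent state ψ_α(z) = e^{-|α|²/2} e^{α z} are (T_{ψ_α})_{mn} = e^{-|α|²/2}·(m!·n!)^{-1/2}·α^{m-n}·m!/(m-n)! for m ≥ n (with the 1/π-normalized inner product) and vanish for m < n, i.e. the matrix is lower triangular. -/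
open MeasureTheory Real
open Set

lemma circle_exp_int (k : ℤ) :
    (∫ θ in Ioo (-π) π, Complex.exp (k * θ * Complex.I)) =
      if k = 0 then (2 * π : ℂ) else 0 := by
  rw [← integral_Ioc_eq_integral_Ioo,
    ← intervalIntegral.integral_of_le (by linarith [Real.pi_pos] : (-π : ℝ) ≤ π)]
  by_cases hk : k = 0
  · subst hk
    simp
    push_cast
    ring
  · rw [if_neg hk]
    have hc : (k : ℂ) * Complex.I ≠ 0 := by
      simp [Complex.I_ne_zero, hk]
    simp_rw [mul_right_comm (k : ℂ) _ Complex.I]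
    rw [integral_exp_mul_complex hc]
    have h1 : (k : ℂ) * Complex.I * (π : ℝ) =
        (k : ℂ) * Complex.I * ((-π : ℝ) : ℂ) + (k : ℤ) * (2 * π * Complex.I) := by
      push_cast; ring
    rw [h1, Complex.exp_add, Complex.exp_int_mul_two_pi_mul_I, mul_one, sub_self, zero_div]

lemma exp_tsum (w : ℂ) : Complex.exp w = ∑' j : ℕ, w ^ j / j.factorial := by
  rw [Complex.exp_eq_exp_ℂ, NormedSpace.exp_eq_tsum_div]

lemma angular (c : ℂ) (m n : ℕ) :
    (∫ θ in Ioo (-π) π,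
        Complex.exp (((n : ℤ) - (m : ℤ)) * θ * Complex.I) *
          Complex.exp (c * Complex.exp (θ * Complex.I))) =
      if n ≤ m then (2 * π : ℂ) * c ^ (m - n) / (m - n).factorial else 0 := by
  set k : ℤ := (n : ℤ) - (m : ℤ) with hk
  have hint : ∀ θ : ℝ,
      Complex.exp (k * θ * Complex.I) * Complex.exp (c * Complex.exp (θ * Complex.I)) =
        ∑' j : ℕ, (c ^ j / j.factorial) * Complex.exp ((k + j) * θ * Complex.I) := by
    intro θ
    rw [exp_tsum (c * Complex.exp (θ * Complex.I)), ← tsum_mul_left]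
    congr 1; funext j
    rw [mul_pow, ← Complex.exp_nat_mul,
      show ((k : ℂ) + j) * θ * Complex.I = (k : ℂ) * θ * Complex.I + j * (θ * Complex.I) by
        push_cast; ring, Complex.exp_add]
    ring
  simp_rw [show (((n:ℤ) : ℂ) - ((m:ℤ) : ℂ)) = ((k : ℤ) : ℂ) by rw [hk]; push_cast; ring]
  rw [show (fun θ : ℝ => Complex.exp (k * θ * Complex.I) *
        Complex.exp (c * Complex.exp (θ * Complex.I))) =
      (fun θ : ℝ => ∑' j : ℕ, (c ^ j / j.factorial) * Complex.exp ((k + j) * θ * Complex.I))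
    from funext hint]
  rw [integral_tsum]
  · have hterm : ∀ j : ℕ,
        (∫ θ in Ioo (-π) π, (c ^ j / j.factorial) * Complex.exp ((k + j) * θ * Complex.I)) =
          (c ^ j / j.factorial) * (if k + j = 0 then (2 * π : ℂ) else 0) := by
      intro j
      rw [MeasureTheory.integral_const_mul]
      congr 1
      have := circle_exp_int (k + j)
      simpa using this
    simp_rw [hterm]
    by_cases hnm : n ≤ m
    · rw [if_pos hnm]
      rw [tsum_eq_single (m - n)]
      · have h0 : k + ((m - n : ℕ) : ℤ) = 0 := by omega
        rw [if_pos h0, mul_comm, mul_div_assoc]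
      · intro j hj
        have h0 : ¬ (k + (j : ℤ) = 0) := by omega
        rw [if_neg h0, mul_zero]
    · rw [if_neg hnm]
      have : ∀ j : ℕ, (c ^ j / j.factorial) * (if k + j = 0 then (2 * π : ℂ) else 0) = 0 := by
        intro j
        have h0 : ¬ (k + (j : ℤ) = 0) := by omega
        rw [if_neg h0, mul_zero]
      simp_rw [this, tsum_zero]
  · intro j
    apply Continuous.aestronglyMeasurable
    continuity
  · have hnorm : ∀ j : ℕ, ∀ θ : ℝ,
        ‖(c ^ j / j.factorial) * Complex.exp ((k + j) * θ * Complex.I)‖₊ =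
          ‖c ^ j / (j.factorial : ℂ)‖₊ := by
      intro j θ
      have : ‖Complex.exp (((k : ℂ) + j) * θ * Complex.I)‖ = 1 := by
        rw [Complex.norm_exp]
        have : ((((k : ℂ) + j) * θ * Complex.I)).re = 0 := by
          simp [Complex.mul_re, Complex.mul_im]
        rw [this, Real.exp_zero]
      ext
      simp only [nnnorm_mul, NNReal.coe_mul, coe_nnnorm]
      rw [this, mul_one]
    simp_rw [enorm_eq_nnnorm]
    simp_rw [hnorm]
    rw [ne_eq]
    simp_rw [MeasureTheory.setLIntegral_const]
    rw [ENNReal.tsum_mul_right]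
    apply ENNReal.mul_ne_top
    · rw [ENNReal.tsum_coe_ne_top_iff_summable]
      rw [← NNReal.summable_coe]
      have : ∀ j : ℕ, ((‖c ^ j / (j.factorial : ℂ)‖₊ : ℝ)) = ‖c‖ ^ j / j.factorial := by
        intro j
        rw [coe_nnnorm]
        simp [norm_div, norm_pow]
      simp_rw [this]
      exact Real.summable_pow_div_factorial ‖c‖
    · simp [Real.volume_Ioo]

lemma polar_symm (p : ℝ × ℝ) :
    Complex.polarCoord.symm p = (p.1 : ℂ) * Complex.exp (p.2 * Complex.I) := by
  rw [Complex.polarCoord_symm_apply, Complex.exp_mul_I]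
  push_cast
  ring

lemma key_integral (α : ℂ) (m n : ℕ) :
    (∫ z : ℂ, (starRingEnd ℂ z) ^ m * z ^ n * Complex.exp (α * z) *
        (Real.exp (-‖z‖ ^ 2) : ℂ)) =
      if n ≤ m then
        (π : ℂ) * (m.factorial : ℂ) * α ^ (m - n) / ((m - n).factorial : ℂ)
      else 0 := by
  set f : ℂ → ℂ := fun z => (starRingEnd ℂ z) ^ m * z ^ n * Complex.exp (α * z) *
    (Real.exp (-‖z‖ ^ 2) : ℂ) with hf
  -- the radial bound
  set u : ℝ → ℝ := fun r => |r| ^ (m + n + 1) * (Real.exp (‖α‖ * |r|) * Real.exp (-r ^ 2))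
    with hu
  have hu_int : IntegrableOn u (Ioi 0) := by
    have h1 : IntegrableOn (fun x : ℝ => x ^ ((m + n + 1 : ℕ) : ℝ) *
        Real.exp (-(1/2 : ℝ) * x ^ 2)) (Ioi 0) :=
      integrableOn_rpow_mul_exp_neg_mul_sq (by norm_num) (lt_of_lt_of_le neg_one_lt_zero (Nat.cast_nonneg _))
    apply Integrable.mono' (h1.const_mul (Real.exp (‖α‖ ^ 2 / 2)))
    · apply Continuous.aestronglyMeasurable
      apply Continuous.mul
      · exact (continuous_abs.pow _)
      · exact ((continuous_const.mul continuous_abs).rexp.mul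
          ((continuous_pow 2).neg.rexp))
    · filter_upwards [ae_restrict_mem measurableSet_Ioi] with x hx
      have hx0 : (0:ℝ) < x := hx
      have hxa : |x| = x := abs_of_pos hx0
      rw [Real.norm_eq_abs, hu]
      simp only [hxa]
      rw [abs_of_nonneg (by positivity)]
      rw [Real.rpow_natCast]
      have hle : Real.exp (‖α‖ * x) * Real.exp (-x ^ 2) ≤
          Real.exp (‖α‖ ^ 2 / 2) * Real.exp (-(1/2 : ℝ) * x ^ 2) := by
        rw [← Real.exp_add, ← Real.exp_add]
        apply Real.exp_le_exp.2
        nlinarith [sq_nonneg (x - ‖α‖)]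
      calc x ^ (m + n + 1) * (Real.exp (‖α‖ * x) * Real.exp (-x ^ 2))
          ≤ x ^ (m + n + 1) * (Real.exp (‖α‖ ^ 2 / 2) * Real.exp (-(1/2 : ℝ) * x ^ 2)) := by
            apply mul_le_mul_of_nonneg_left hle (by positivity)
        _ = Real.exp (‖α‖ ^ 2 / 2) * (x ^ (m + n + 1) * Real.exp (-(1/2 : ℝ) * x ^ 2)) := by
            ring
  -- integrability on the polar rectangle
  have hbound : ∀ p : ℝ × ℝ, ‖p.1 • f (Complex.polarCoord.symm p)‖ ≤ u p.1 * 1 := by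
    intro p
    rw [mul_one, norm_smul, hf]
    simp only [norm_mul, norm_pow, RCLike.norm_conj,
      Complex.norm_polarCoord_symm, Complex.norm_exp, Complex.norm_real, Real.abs_exp,
      Real.norm_eq_abs]
    rw [hu]
    rw [sq_abs]
    have h1 : (α * Complex.polarCoord.symm p).re ≤ ‖α‖ * |p.1| := by
      calc (α * Complex.polarCoord.symm p).re ≤ ‖α * Complex.polarCoord.symm p‖ :=
            Complex.re_le_norm _
        _ = ‖α‖ * |p.1| := by
            rw [norm_mul, Complex.norm_polarCoord_symm]
    have h2 : Real.exp ((α * Complex.polarCoord.symm p).re) ≤ Real.exp (‖α‖ * |p.1|) :=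
      Real.exp_le_exp.2 h1
    calc |p.1| * (|p.1| ^ m * |p.1| ^ n * Real.exp ((α * Complex.polarCoord.symm p).re) *
          Real.exp (-p.1 ^ 2))
        ≤ |p.1| * (|p.1| ^ m * |p.1| ^ n * Real.exp (‖α‖ * |p.1|) * Real.exp (-p.1 ^ 2)) := by
          apply mul_le_mul_of_nonneg_left _ (abs_nonneg _)
          apply mul_le_mul_of_nonneg_right _ (Real.exp_pos _).le
          apply mul_le_mul_of_nonneg_left h2 (by positivity)
      _ = |p.1| ^ (m + n + 1) * (Real.exp (‖α‖ * |p.1|) * Real.exp (-p.1 ^ 2)) := by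
          ring
  have hsymm : Continuous fun p : ℝ × ℝ => Complex.polarCoord.symm p := by
    simp_rw [polar_symm]
    fun_prop
  have hfc : Continuous f := by
    rw [hf]
    exact (((Complex.continuous_conj.pow m).mul (continuous_pow n)).mul
        (Complex.continuous_exp.comp (continuous_const.mul continuous_id))).mul
      (Complex.continuous_ofReal.comp
        ((continuous_norm.pow 2).neg.rexp))
  have hcont : Continuous fun p : ℝ × ℝ => p.1 • f (Complex.polarCoord.symm p) :=
    continuous_fst.smul (hfc.comp hsymm)
  have hInt : IntegrableOn (fun p : ℝ × ℝ => p.1 • f (Complex.polarCoord.symm p))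
      (Ioi (0:ℝ) ×ˢ Ioo (-π) π) := by
    have hv : IntegrableOn (fun _ : ℝ => (1:ℝ)) (Ioo (-π) π) :=
      integrableOn_const (by rw [Real.volume_Ioo]; exact ENNReal.ofReal_ne_top)
    have hprod : Integrable (fun p : ℝ × ℝ => u p.1 * 1)
        ((volume.restrict (Ioi (0:ℝ))).prod (volume.restrict (Ioo (-π) π))) :=
      hu_int.mul_prod hv
    rw [Measure.prod_restrict] at hprod
    have hprod' : IntegrableOn (fun p : ℝ × ℝ => u p.1 * 1) (Ioi (0:ℝ) ×ˢ Ioo (-π) π) := by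
      rw [IntegrableOn, Measure.volume_eq_prod]
      exact hprod
    exact hprod'.mono' hcont.aestronglyMeasurable.restrict
      (Filter.Eventually.of_forall hbound)
  have hpolar := (Complex.integral_comp_polarCoord_symm f).symm
  rw [hpolar, polarCoord_target]
  have hInt2 : IntegrableOn (fun p : ℝ × ℝ => p.1 • f (Complex.polarCoord.symm p))
      (Ioi (0:ℝ) ×ˢ Ioo (-π) π) (volume.prod volume) := by
    rw [← Measure.volume_eq_prod]; exact hInt
  rw [show (volume : Measure (ℝ × ℝ)) = volume.prod volume from Measure.volume_eq_prod ℝ ℝ]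
  rw [MeasureTheory.setIntegral_prod _ hInt2]
  have hinner : ∀ r ∈ Ioi (0:ℝ),
      (∫ θ in Ioo (-π) π, r • f (Complex.polarCoord.symm (r, θ))) =
        ((r:ℂ) ^ (m + n + 1) * (Real.exp (-r ^ 2) : ℂ)) *
          (if n ≤ m then (2 * π : ℂ) * (α * r) ^ (m - n) / (m - n).factorial else 0) := by
    intro r hr
    have hr0 : (0:ℝ) < r := hr
    have hstep : ∀ θ : ℝ, r • f (Complex.polarCoord.symm (r, θ)) =
        ((r:ℂ) ^ (m + n + 1) * (Real.exp (-r ^ 2) : ℂ)) *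
          (Complex.exp (((n : ℤ) - (m : ℤ)) * θ * Complex.I) *
            Complex.exp ((α * r) * Complex.exp (θ * Complex.I))) := by
      intro θ
      rw [hf]
      simp only
      rw [polar_symm]
      simp only
      have habs : ‖(r:ℂ) * Complex.exp ((θ:ℂ) * Complex.I)‖ = r := by
        rw [norm_mul, Complex.norm_exp]
        simp [Complex.norm_real, abs_of_pos hr0, Complex.mul_re]
      rw [habs]
      have hconj : (starRingEnd ℂ) ((r:ℂ) * Complex.exp ((θ:ℂ) * Complex.I)) =
          (r:ℂ) * Complex.exp (-(θ:ℂ) * Complex.I) := by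
        rw [map_mul, Complex.conj_ofReal, ← Complex.exp_conj]
        congr 1
        simp [Complex.conj_I, Complex.conj_ofReal]
      rw [hconj]
      have h3 : Complex.exp (-(θ:ℂ) * Complex.I) ^ m * Complex.exp ((θ:ℂ) * Complex.I) ^ n =
          Complex.exp ((((n:ℤ):ℂ) - ((m:ℤ):ℂ)) * θ * Complex.I) := by
        rw [← Complex.exp_nat_mul, ← Complex.exp_nat_mul, ← Complex.exp_add]
        congr 1
        push_cast
        ring
      rw [show α * ((r:ℂ) * Complex.exp ((θ:ℂ) * Complex.I)) =
          (α * r) * Complex.exp ((θ:ℂ) * Complex.I) from by ring]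
      rw [← h3, Complex.real_smul]
      push_cast
      ring
    simp only [hstep]
    rw [MeasureTheory.integral_const_mul, angular (α * r) m n]
  rw [MeasureTheory.setIntegral_congr_fun measurableSet_Ioi hinner]
  by_cases hnm : n ≤ m
  · simp only [if_pos hnm]
    have hpt : ∀ r ∈ Ioi (0:ℝ),
        ((r:ℂ) ^ (m + n + 1) * (Real.exp (-r ^ 2) : ℂ)) *
            ((2 * π : ℂ) * (α * r) ^ (m - n) / (m - n).factorial) =
          ((2 * π : ℂ) * α ^ (m - n) / (m - n).factorial) *
            ((r ^ (2 * m + 1) * Real.exp (-r ^ 2) : ℝ) : ℂ) := by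
      intro r _
      have he : m + n + 1 + (m - n) = 2 * m + 1 := by omega
      rw [Complex.ofReal_mul, Complex.ofReal_pow, ← he, pow_add]
      ring
    rw [MeasureTheory.setIntegral_congr_fun measurableSet_Ioi hpt,
      MeasureTheory.integral_const_mul]
    have hcast : (∫ a in Ioi (0:ℝ), ((a ^ (2 * m + 1) * Real.exp (-a ^ 2) : ℝ) : ℂ)) =
        ((∫ a in Ioi (0:ℝ), a ^ (2 * m + 1) * Real.exp (-a ^ 2) : ℝ) : ℂ) := by
      exact integral_ofReal
    rw [hcast]
    have hrad : (∫ r in Ioi (0:ℝ), r ^ (2 * m + 1) * Real.exp (-r ^ 2)) =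
        (m.factorial : ℝ) / 2 := by
      have h1 : (∫ r in Ioi (0:ℝ), r ^ (2 * m + 1) * Real.exp (-r ^ 2)) =
          ∫ r in Ioi (0:ℝ), r ^ ((2 * m + 1 : ℕ) : ℝ) * Real.exp (-r ^ (2:ℝ)) := by
        refine MeasureTheory.setIntegral_congr_fun measurableSet_Ioi (fun x hx => ?_)
        rw [Real.rpow_natCast, Real.rpow_two]
      rw [h1, integral_rpow_mul_exp_neg_rpow two_pos
        (lt_of_lt_of_le neg_one_lt_zero (Nat.cast_nonneg _))]
      rw [show (((2 * m + 1 : ℕ) : ℝ) + 1) / 2 = (m : ℝ) + 1 from by push_cast; ring,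
        Real.Gamma_nat_eq_factorial]
      ring
    rw [hrad]
    push_cast
    ring
  · simp only [if_neg hnm, mul_zero, integral_zero]


/-- Fix `α ∈ ℂ` and naturals `m`, `n`. Then
`∫_ℂ conj(z)^m z^n e^{α z} e^{-|z|²} dA(z)` equals `π · m! · α^{m-n}/(m-n)!` when
`m ≥ n` and `0` when `m < n`. Consequently, the matrix elements of the Toeplitz operator
whose symbol is the coherent state `ψ_α(z) = e^{-|α|²/2} e^{α z}` are
`(T_{ψ_α})_{mn} = e^{-|α|²/2} (m! n!)^{-1/2} α^{m-n} m!/(m-n)!` for `m ≥ n` and vanish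
for `m < n`, i.e. the matrix is lower triangular. -/
theorem toeplitz_coherent_state_matrix (α : ℂ) (m n : ℕ) :
    ((∫ z : ℂ, (starRingEnd ℂ z) ^ m * z ^ n * Complex.exp (α * z) *
        (Real.exp (-‖z‖ ^ 2) : ℂ)) =
      if n ≤ m then
        (π : ℂ) * (m.factorial : ℂ) * α ^ (m - n) / ((m - n).factorial : ℂ)
      else 0) ∧
    (((1 / (π : ℂ)) * ((1 / Real.sqrt (m.factorial * n.factorial) : ℝ) : ℂ) *
        ∫ z : ℂ, (starRingEnd ℂ z) ^ m *
          (Complex.exp (-((‖α‖ : ℂ)) ^ 2 / 2) * Complex.exp (α * z)) *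
          z ^ n * (Real.exp (-‖z‖ ^ 2) : ℂ)) =
      if n ≤ m then
        Complex.exp (-((‖α‖ : ℂ)) ^ 2 / 2) *
          ((1 / Real.sqrt (m.factorial * n.factorial) : ℝ) : ℂ) *
          α ^ (m - n) * (m.factorial : ℂ) / ((m - n).factorial : ℂ)
      else 0) := by
  have h1 := key_integral α m n
  refine ⟨h1, ?_⟩
  have hre : ∀ z : ℂ, (starRingEnd ℂ z) ^ m *
      (Complex.exp (-((‖α‖ : ℂ)) ^ 2 / 2) * Complex.exp (α * z)) *
      z ^ n * (Real.exp (-‖z‖ ^ 2) : ℂ) =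
      Complex.exp (-((‖α‖ : ℂ)) ^ 2 / 2) *
        ((starRingEnd ℂ z) ^ m * z ^ n * Complex.exp (α * z) *
          (Real.exp (-‖z‖ ^ 2) : ℂ)) := fun z => by ring
  simp only [hre]
  rw [MeasureTheory.integral_const_mul, h1]
  by_cases hnm : n ≤ m
  · rw [if_pos hnm, if_pos hnm]
    have hpi : (π : ℂ) ≠ 0 := Complex.ofReal_ne_zero.2 Real.pi_ne_zero
    have key : ∀ (s c M A F : ℂ), (1/(π:ℂ)) * s * (c * ((π:ℂ) * M * A / F)) =
        ((π:ℂ)/(π:ℂ)) * (c * s * A * M / F) := fun s c M A F => by ring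
    rw [key, div_self hpi, one_mul]
  · rw [if_neg hnm, if_neg hnm, mul_zero, mul_zero]
end
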